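/- Suppose a ≥ 1 and b < 1/a. Then the supremum of Rs(P1,P2) over all P1 ≥ 0 and P2 ≥ 0 equals (1/2)·log₂(1/(a·b)). -/

import Mathlib

/-- `g x = (1/2) * log_2 (1 + x)`. -/
noncomputable def g (x : ℝ) : ℝ := (1 / 2) * Real.logb 2 (1 + x)

/-- The achievable secrecy rate `Rs(P1, P2)` for the Gaussian wiretap channel with a
helping interferer, with channel gains `a`, `b` and powers `P1`, `P2`. -/
noncomputable def Rs (a b P1 P2 : ℝ) : ℝ :=
  if 1 + P2 ≤ a then 0
  else if 1 ≤ a then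
    -- case `1 ≤ a < 1 + P2`
    if 1 + P1 ≤ b then g P1 - g (a * P1 / (1 + P2))
    else if 1 ≤ b then max 0 (g (P1 + b * P2) - g (a * P1 + P2))
    else max 0 (g (P1 / (1 + b * P2)) - g (a * P1 / (1 + P2)))
  else
    -- case `a < 1`, with `β1 = (1+P1)/(1+a*P1)` and `β2 = a*(1+P1)/(1+a*P1+(1-a)*P2)`
    if 1 + P1 ≤ b then g P1 - g (a * P1 / (1 + P2))
    else if (1 + P1) / (1 + a * P1) ≤ b then g (P1 + b * P2) - g (a * P1 + P2)
    else if a * (1 + P1) / (1 + a * P1 + (1 - a) * P2) ≤ b then g P1 - g (a * P1)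
    else g (P1 / (1 + b * P2)) - g (a * P1 / (1 + P2))

lemma key_ub (a b P1 P2 : ℝ) (ha : 1 ≤ a) (hb0 : 0 < b) (hab : a * b < 1) (hb1 : b < 1)
    (hP1 : 0 ≤ P1) (hP2 : 0 ≤ P2) :
    g (P1 / (1 + b * P2)) - g (a * P1 / (1 + P2)) ≤ (1 / 2) * Real.logb 2 (1 / (a * b)) := by
  have ha0 : (0:ℝ) < a := lt_of_lt_of_le one_pos ha
  have hab0 : (0:ℝ) < a * b := mul_pos ha0 hb0
  have h1 : (0:ℝ) < 1 + b * P2 := by positivity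
  have h2 : (0:ℝ) < 1 + P2 := by positivity
  set x := P1 / (1 + b * P2) with hxdef
  set y := a * P1 / (1 + P2) with hydef
  have hx : 0 ≤ x := by positivity
  have hy : 0 ≤ y := by positivity
  have hxpos : (0:ℝ) < 1 + x := by linarith
  have hypos : (0:ℝ) < 1 + y := by linarith
  have key : (1 + x) ≤ (1 + y) * (1 / (a * b)) := by
    rw [hxdef, hydef, one_add_div h1.ne', one_add_div h2.ne', mul_one_div, div_div,
      div_le_div_iff₀ h1 (by positivity)]
    have hfac1 : 0 ≤ (1 - a * b) * ((1 + b * P2) * (1 + P2)) :=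
      mul_nonneg (by linarith) (by positivity)
    have hfac2 : 0 ≤ a * P1 * (1 - b) := mul_nonneg (by positivity) (by linarith)
    nlinarith [hfac1, hfac2]
  have hlog : Real.logb 2 (1 + x) ≤ Real.logb 2 ((1 + y) * (1 / (a * b))) :=
    (Real.logb_le_logb one_lt_two hxpos (by positivity)).2 key
  rw [Real.logb_mul hypos.ne' (by positivity)] at hlog
  simp only [g]
  linarith

theorem stmt1 (a b : ℝ) (ha : 1 ≤ a) (hb0 : 0 < b) (hb : b < 1 / a) :
    IsLUB {r : ℝ | ∃ P1 P2 : ℝ, 0 ≤ P1 ∧ 0 ≤ P2 ∧ r = Rs a b P1 P2}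
      ((1 / 2) * Real.logb 2 (1 / (a * b))) := by
  have ha0 : (0:ℝ) < a := lt_of_lt_of_le one_pos ha
  have hab : a * b < 1 := by
    have := (lt_div_iff₀ ha0).1 hb
    linarith [mul_comm a b]
  have hb1 : b < 1 := by
    have : 1 / a ≤ 1 := by
      rw [div_le_one ha0]; exact ha
    linarith
  have hab0 : (0:ℝ) < a * b := mul_pos ha0 hb0
  have hL0 : 0 ≤ (1 / 2) * Real.logb 2 (1 / (a * b)) := by
    have : (1:ℝ) ≤ 1 / (a * b) := by
      rw [le_div_iff₀ hab0]; linarith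
    have := Real.logb_nonneg one_lt_two this
    linarith
  constructor
  · -- upper bound
    rintro r ⟨P1, P2, hP1, hP2, rfl⟩
    unfold Rs
    split_ifs with h1 h2 h3 h4 <;>
      first
        | exact hL0
        | linarith
        | exact max_le hL0 (key_ub a b P1 P2 ha hb0 hab hb1 hP1 hP2)
  · -- least upper bound
    intro c hc
    set L := (1 / 2) * Real.logb 2 (1 / (a * b)) with hL
    -- the limiting family P1 = t^2, P2 = t
    set f : ℝ → ℝ := fun t => g (t ^ 2 / (1 + b * t)) - g (a * t ^ 2 / (1 + t)) with hf
    -- tendsto of the ratio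
    have hinv : Filter.Tendsto (fun t : ℝ => 1 / t) Filter.atTop (nhds 0) := by
      simpa using tendsto_inv_atTop_zero
    have hinv2 : Filter.Tendsto (fun t : ℝ => 1 / t ^ 2) Filter.atTop (nhds 0) := by
      have : Filter.Tendsto (fun t : ℝ => t ^ 2) Filter.atTop Filter.atTop :=
        Filter.tendsto_pow_atTop (by norm_num)
      simpa [Pi.inv_def] using this.inv_tendsto_atTop
    have h1 : Filter.Tendsto (fun t : ℝ => 1 / t ^ 2 + b / t + 1) Filter.atTop (nhds 1) := by
      have hbt : Filter.Tendsto (fun t : ℝ => b / t) Filter.atTop (nhds 0) := by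
        have := hinv.const_mul b
        simpa [mul_one_div, div_eq_mul_inv] using this
      have := (hinv2.add hbt).add tendsto_const_nhds (b := (1:ℝ))
      simpa using this
    have h2 : Filter.Tendsto (fun t : ℝ => 1 / t + 1) Filter.atTop (nhds 1) := by
      have := hinv.add (tendsto_const_nhds (x := (1:ℝ)) (f := Filter.atTop))
      simpa using this
    have h3 : Filter.Tendsto (fun t : ℝ => 1 / t + b) Filter.atTop (nhds b) := by
      have := hinv.add (tendsto_const_nhds (x := b) (f := Filter.atTop))
      simpa using this
    have h4 : Filter.Tendsto (fun t : ℝ => 1 / t ^ 2 + 1 / t + a) Filter.atTop (nhds a) := by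
      have := (hinv2.add hinv).add (tendsto_const_nhds (x := a) (f := Filter.atTop))
      simpa using this
    have hRaux : Filter.Tendsto
        (fun t : ℝ => ((1 / t ^ 2 + b / t + 1) * (1 / t + 1)) /
          ((1 / t + b) * (1 / t ^ 2 + 1 / t + a))) Filter.atTop (nhds (1 / (a * b))) := by
      have := (h1.mul h2).div (h3.mul h4) (by positivity)
      have heq : (1:ℝ) * 1 / (b * a) = 1 / (a * b) := by ring
      rw [heq] at this
      exact this
    have hR : Filter.Tendsto
        (fun t : ℝ => (1 + b * t + t ^ 2) * (1 + t) / ((1 + b * t) * (1 + t + a * t ^ 2)))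
        Filter.atTop (nhds (1 / (a * b))) := by
      apply hRaux.congr'
      filter_upwards [Filter.eventually_ge_atTop (1:ℝ)] with t ht
      have ht0 : (0:ℝ) < t := by linarith
      field_simp
      try ring
    -- continuity of (1/2) * logb 2 at 1/(a*b)
    have hcont : ContinuousAt (fun x : ℝ => (1 / 2) * Real.logb 2 x) (1 / (a * b)) := by
      have hne : (1 / (a * b)) ≠ 0 := by positivity
      simp only [Real.logb]
      exact continuousAt_const.mul ((Real.continuousAt_log hne).div_const _)
    have hlim : Filter.Tendsto f Filter.atTop (nhds ((1 / 2) * Real.logb 2 (1 / (a * b)))) := by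
      have h0 := (hcont.tendsto).comp hR
      apply h0.congr'
      filter_upwards [Filter.eventually_ge_atTop (1:ℝ)] with t ht
      have ht0 : (0:ℝ) < t := by linarith
      have hbt : (0:ℝ) < 1 + b * t := by positivity
      have h1t : (0:ℝ) < 1 + t := by positivity
      have hx : (0:ℝ) < 1 + t ^ 2 / (1 + b * t) := by positivity
      have hy : (0:ℝ) < 1 + a * t ^ 2 / (1 + t) := by positivity
      have hratio : (1 + b * t + t ^ 2) * (1 + t) / ((1 + b * t) * (1 + t + a * t ^ 2)) =
          (1 + t ^ 2 / (1 + b * t)) / (1 + a * t ^ 2 / (1 + t)) := by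
        field_simp
        try ring
      simp only [Function.comp_apply]
      rw [hratio, Real.logb_div hx.ne' hy.ne']
      simp only [hf, g]
      ring
    refine le_of_tendsto hlim ?_
    filter_upwards [Filter.eventually_ge_atTop (max 1 a)] with t ht
    have ht1 : (1:ℝ) ≤ t := le_trans (le_max_left _ _) ht
    have hta : a ≤ t := le_trans (le_max_right _ _) ht
    have ht0 : (0:ℝ) ≤ t := by linarith
    have hmem : Rs a b (t ^ 2) t ∈
        {r : ℝ | ∃ P1 P2 : ℝ, 0 ≤ P1 ∧ 0 ≤ P2 ∧ r = Rs a b P1 P2} :=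
      ⟨t ^ 2, t, sq_nonneg t, ht0, rfl⟩
    have hRs : Rs a b (t ^ 2) t = max 0 (f t) := by
      unfold Rs
      rw [if_neg (by linarith), if_pos ha, if_neg (by nlinarith), if_neg (by linarith)]
    have : f t ≤ Rs a b (t ^ 2) t := by rw [hRs]; exact le_max_right _ _
    exact le_trans this (hc hmem)
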